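/- Let u, v, w : [0,∞) → [0,∞) be continuous functions with u absolutely continuous, satisfying u'(t) + 2 v(t) u(t) ≤ 2 w(t) √(u(t)) for almost every t ≥ 0. Then for every t ≥ 0, √(u(t)) ≤ e^{-V(t)} √(u(0)) + e^{-V(t)} ∫₀ᵗ e^{V(s)} w(s) ds, where V(t) = ∫₀ᵗ v(τ) dτ. -/

import Mathlib

open MeasureTheory intervalIntegral Set Filter Topology

private lemma prim_hasDeriv {f : ℝ → ℝ} (hf : ContinuousOn f (Set.Ici 0)) {a x : ℝ}
    (ha : 0 ≤ a) (hx : 0 ≤ x) :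
    HasDerivWithinAt (fun s => ∫ τ in a..s, f τ) (f x) (Set.Ici x) x := by
  apply intervalIntegral.integral_hasDerivWithinAt_right
  · exact (hf.mono (fun t ht => le_trans (le_min ha hx) ht.1)).intervalIntegrable
  · exact ⟨Set.Ici 0, Filter.mem_of_superset self_mem_nhdsWithin
      (fun t (ht : x < t) => le_of_lt (lt_of_le_of_lt hx ht)),
      hf.aestronglyMeasurable measurableSet_Ici⟩
  · exact (hf x hx).mono (fun t (ht : x < t) => le_of_lt (lt_of_le_of_lt hx ht))

private lemma prim_contOn {f : ℝ → ℝ} (hf : ContinuousOn f (Set.Ici 0)) :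
    ContinuousOn (fun s => ∫ τ in (0:ℝ)..s, f τ) (Set.Ici 0) := by
  intro x hx
  replace hx : (0:ℝ) ≤ x := hx
  have h0 : (0:ℝ) ≤ x + 1 := by linarith
  have h1 : ContinuousOn (fun s => ∫ τ in (0:ℝ)..s, f τ) (Set.Icc 0 (x+1)) := by
    have := intervalIntegral.continuousOn_primitive_interval
      (f := f) (a := (0:ℝ)) (b := x+1) (μ := volume) ?_
    · rwa [Set.uIcc_of_le h0] at this
    · rw [Set.uIcc_of_le h0]
      exact (hf.mono (fun t ht => ht.1)).integrableOn_Icc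
  have hmem : Set.Icc 0 (x+1) ∈ 𝓝[Set.Ici 0] x := by
    rw [← Set.Ici_inter_Iic]
    exact Filter.inter_mem self_mem_nhdsWithin
      (mem_nhdsWithin_of_mem_nhds (Iic_mem_nhds (by linarith)))
  exact (h1 x ⟨hx, by linarith⟩).mono_of_mem_nhdsWithin hmem

private lemma key_int {u u' g : ℝ → ℝ}
    (hu'int : ∀ t, 0 ≤ t → IntervalIntegrable u' volume 0 t)
    (hFTC : ∀ t, 0 ≤ t → u t = u 0 + ∫ s in (0:ℝ)..t, u' s)
    (hg : ContinuousOn g (Set.Ici 0))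
    (hle : ∀ᵐ t ∂volume, 0 ≤ t → u' t ≤ g t)
    {x z : ℝ} (hx : 0 ≤ x) (hxz : x ≤ z) :
    u z - u x ≤ ∫ s in x..z, g s := by
  have hz : 0 ≤ z := hx.trans hxz
  have h1 : u z - u x = ∫ s in x..z, u' s := by
    rw [hFTC z hz, hFTC x hx]
    have h2 := intervalIntegral.integral_interval_sub_left (hu'int z hz) (hu'int x hx)
    linarith
  rw [h1]
  apply intervalIntegral.integral_mono_ae_restrict hxz ((hu'int x hx).symm.trans (hu'int z hz))
    ((hg.mono (by rw [Set.uIcc_of_le hxz]; exact fun t ht => hx.trans ht.1)).intervalIntegrable)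
  filter_upwards [ae_restrict_of_ae hle, ae_restrict_mem measurableSet_Icc] with t h1 h2
  exact h1 (hx.trans h2.1)

theorem stmt0 (u v w u' : ℝ → ℝ)
    (hu : ContinuousOn u (Set.Ici 0)) (hv : ContinuousOn v (Set.Ici 0))
    (hw : ContinuousOn w (Set.Ici 0))
    (hun : ∀ t, 0 ≤ t → 0 ≤ u t) (hvn : ∀ t, 0 ≤ t → 0 ≤ v t)
    (hwn : ∀ t, 0 ≤ t → 0 ≤ w t)
    (hu'int : ∀ t, 0 ≤ t → IntervalIntegrable u' volume 0 t)
    (hFTC : ∀ t, 0 ≤ t → u t = u 0 + ∫ s in (0:ℝ)..t, u' s)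
    (hineq : ∀ᵐ t ∂volume, 0 ≤ t →
      u' t + 2 * v t * u t ≤ 2 * w t * Real.sqrt (u t)) :
    ∀ t, 0 ≤ t →
      Real.sqrt (u t) ≤
        Real.exp (-(∫ τ in (0:ℝ)..t, v τ)) * Real.sqrt (u 0) +
          Real.exp (-(∫ τ in (0:ℝ)..t, v τ)) *
            ∫ s in (0:ℝ)..t, Real.exp (∫ τ in (0:ℝ)..s, v τ) * w s := by
  intro t₀ ht₀
  set V : ℝ → ℝ := fun s => ∫ τ in (0:ℝ)..s, v τ with hVdef
  set g : ℝ → ℝ := fun t => 2 * w t * Real.sqrt (u t) - 2 * v t * u t with hgdef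
  have hsqrtu : ContinuousOn (fun t => Real.sqrt (u t)) (Set.Ici 0) :=
    Real.continuous_sqrt.comp_continuousOn hu
  have hgcont : ContinuousOn g (Set.Ici 0) :=
    ((continuousOn_const.mul hw).mul hsqrtu).sub ((continuousOn_const.mul hv).mul hu)
  have hle : ∀ᵐ t ∂volume, 0 ≤ t → u' t ≤ g t := by
    filter_upwards [hineq] with t ht h0t
    have := ht h0t
    simp only [hgdef]
    linarith
  have hVcont : ContinuousOn V (Set.Ici 0) := prim_contOn hv
  have hEcont : ContinuousOn (fun s => Real.exp (V s)) (Set.Ici 0) :=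
    Real.continuous_exp.comp_continuousOn hVcont
  have hInt : ∀ f : ℝ → ℝ, ContinuousOn f (Set.Ici 0) → IntervalIntegrable f volume 0 t₀ :=
    fun f hf => (hf.mono (by rw [Set.uIcc_of_le ht₀]; exact fun t ht => ht.1)).intervalIntegrable
  -- the ε-step
  have key : ∀ ε : ℝ, ε ∈ Set.Ioi (0:ℝ) → Real.sqrt (u t₀) ≤
      Real.exp (-(V t₀)) * (Real.sqrt (u 0 + ε) +
        ∫ s in (0:ℝ)..t₀, Real.exp (V s) * (w s + v s * Real.sqrt ε + ε)) := by
    intro ε hε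
    have hε0 : 0 < ε := hε
    set y : ℝ → ℝ := fun s => Real.sqrt (u s + ε) with hydef
    set W : ℝ → ℝ := fun s => ∫ τ in (0:ℝ)..s, Real.exp (V τ) * (w τ + v τ * Real.sqrt ε + ε)
      with hWdef
    set B : ℝ → ℝ := fun s => Real.exp (-(V s)) * (Real.sqrt (u 0 + ε) + W s) with hBdef
    set fd : ℝ → ℝ := fun x => -(v x * y x) + w x + v x * Real.sqrt ε with hfddef
    set Bd : ℝ → ℝ := fun x => -(v x) * B x + (w x + v x * Real.sqrt ε + ε) with hBddef
    have hycont : ContinuousOn y (Set.Ici 0) :=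
      Real.continuous_sqrt.comp_continuousOn (hu.add continuousOn_const)
    have hypos : ∀ s, 0 ≤ s → 0 < y s := fun s hs =>
      Real.sqrt_pos.2 (by have := hun s hs; linarith)
    have hIcont : ContinuousOn (fun τ => Real.exp (V τ) * (w τ + v τ * Real.sqrt ε + ε))
        (Set.Ici 0) := hEcont.mul ((hw.add (hv.mul continuousOn_const)).add continuousOn_const)
    have hWcont : ContinuousOn W (Set.Ici 0) := prim_contOn hIcont
    -- derivative of B
    have hB' : ∀ x ∈ Set.Ico (0:ℝ) t₀, HasDerivWithinAt B (Bd x) (Set.Ici x) x := by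
      intro x hx
      have h1 : HasDerivWithinAt (fun s => Real.exp (-(V s)))
          (Real.exp (-(V x)) * (-(v x))) (Set.Ici x) x :=
        (prim_hasDeriv hv le_rfl hx.1).neg.exp
      have h2 := ((prim_hasDeriv hIcont le_rfl hx.1).const_add (Real.sqrt (u 0 + ε)))
      have h3 := h1.mul h2
      have e1 : Real.exp (-(V x)) * Real.exp (V x) = 1 := by
        rw [← Real.exp_add, neg_add_cancel, Real.exp_zero]
      refine h3.congr_deriv ?_
      simp only [hBddef, hBdef, hWdef]
      linear_combination (w x + v x * Real.sqrt ε + ε) * e1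
    -- slope condition for y
    have hf' : ∀ x ∈ Set.Ico (0:ℝ) t₀, ∀ r, fd x < r →
        ∃ᶠ z in 𝓝[>] x, slope y x z < r := by
      intro x hx r hr
      have hx0 : 0 ≤ x := hx.1
      have hyx : 0 < y x := hypos x hx0
      set G : ℝ → ℝ := fun s => ∫ τ in x..s, g τ with hGdef
      have hG : HasDerivWithinAt G (g x) (Set.Ici x) x := prim_hasDeriv hgcont hx0 hx0
      have hGs : Tendsto (slope G x) (𝓝[>] x) (𝓝 (g x)) := by
        have := (hasDerivWithinAt_iff_tendsto_slope).1 hG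
        rwa [Set.Ici_sdiff_left] at this
      have hys : Tendsto (fun z => y z + y x) (𝓝[>] x) (𝓝 (y x + y x)) := by
        have : ContinuousWithinAt y (Set.Ioi x) x :=
          (hycont x hx0).mono (fun t (ht : x < t) => le_of_lt (lt_of_le_of_lt hx0 ht))
        exact this.tendsto.add tendsto_const_nhds
      have hdiv : Tendsto (fun z => slope G x z / (y z + y x)) (𝓝[>] x)
          (𝓝 (g x / (y x + y x))) := hGs.div hys (by positivity)
      -- the pointwise bound  g x / (2 y x) ≤ fd x
      have hineq2 : g x / (y x + y x) ≤ fd x := by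
        have hA : 0 ≤ u x := hun x hx0
        have hs0 : 0 ≤ Real.sqrt (u x) := Real.sqrt_nonneg _
        have es : Real.sqrt (u x) * Real.sqrt (u x) = u x := Real.mul_self_sqrt hA
        have ey : y x * y x = u x + ε := Real.mul_self_sqrt (by linarith)
        have ee : Real.sqrt ε * Real.sqrt ε = ε := Real.mul_self_sqrt hε0.le
        have hsy : Real.sqrt (u x) ≤ y x := Real.sqrt_le_sqrt (by linarith)
        have hey : Real.sqrt ε ≤ y x := Real.sqrt_le_sqrt (by linarith)
        have hw0 : 0 ≤ w x := hwn x hx0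
        have hv0 : 0 ≤ v x := hvn x hx0
        have h1 : w x * Real.sqrt (u x) ≤ w x * y x := mul_le_mul_of_nonneg_left hsy hw0
        have h2 : ε ≤ Real.sqrt ε * y x := by nlinarith [Real.sqrt_nonneg ε]
        have h3 : v x * ε ≤ v x * (Real.sqrt ε * y x) := mul_le_mul_of_nonneg_left h2 hv0
        rw [div_le_iff₀ (by positivity)]
        simp only [hgdef, hfddef]
        nlinarith [ey]
      have hev1 : ∀ᶠ z in 𝓝[>] x, slope G x z / (y z + y x) < r :=
        hdiv.eventually_lt_const (lt_of_le_of_lt hineq2 hr)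
      have hev2 : ∀ᶠ z in 𝓝[>] x, slope y x z ≤ slope G x z / (y z + y x) := by
        filter_upwards [self_mem_nhdsWithin] with z (hz : x < z)
        have hz0 : 0 ≤ z := hx0.trans hz.le
        have hyz : 0 < y z := hypos z hz0
        have hkey : u z - u x ≤ G z := key_int hu'int hFTC hgcont hle hx0 hz.le
        have hGx : G x = 0 := intervalIntegral.integral_same
        have hsq : (y z - y x) * (y z + y x) = u z - u x := by
          have e1 : y z * y z = u z + ε := Real.mul_self_sqrt (by have := hun z hz0; linarith)
          have e2 : y x * y x = u x + ε := Real.mul_self_sqrt (by have := hun x hx0; linarith)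
          linear_combination e1 - e2
        have hnum : y z - y x = (u z - u x) / (y z + y x) :=
          (eq_div_iff (by positivity)).2 hsq
        rw [slope_def_field, slope_def_field, hnum, hGx, sub_zero, div_div, div_div]
        rw [mul_comm (y z + y x) (z - x)]
        exact div_le_div_of_nonneg_right hkey (mul_nonneg (by linarith) (by linarith))
      exact ((hev2.and hev1).mono (fun z hz => lt_of_le_of_lt hz.1 hz.2)).frequently
    have hyIcc : ContinuousOn y (Set.Icc 0 t₀) := hycont.mono (fun t ht => ht.1)
    have hBIcc : ContinuousOn B (Set.Icc 0 t₀) :=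
      (Real.continuous_exp.comp_continuousOn (hVcont.mono (fun t ht => ht.1)).neg).mul
        (continuousOn_const.add (hWcont.mono (fun t ht => ht.1)))
    have ha : y 0 ≤ B 0 := le_of_eq (by
      simp [hydef, hBdef, hWdef, hVdef, intervalIntegral.integral_same])
    have bound : ∀ x ∈ Set.Ico (0:ℝ) t₀, y x = B x → fd x < Bd x := by
      intro x hx heq
      simp only [hfddef, hBddef, ← heq]
      nlinarith [hε0]
    have hmain := image_le_of_liminf_slope_right_lt_deriv_boundary' hyIcc hf' ha hBIcc hB' bound
      (Set.right_mem_Icc.2 ht₀)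
    have h9 : Real.sqrt (u t₀) ≤ y t₀ := Real.sqrt_le_sqrt (by linarith)
    exact h9.trans hmain
  -- split the integral and take the limit ε → 0⁺
  have hEw : IntervalIntegrable (fun s => Real.exp (V s) * w s) volume 0 t₀ :=
    hInt _ (hEcont.mul hw)
  have hEv : IntervalIntegrable (fun s => Real.exp (V s) * v s) volume 0 t₀ :=
    hInt _ (hEcont.mul hv)
  have hE : IntervalIntegrable (fun s => Real.exp (V s)) volume 0 t₀ := hInt _ hEcont
  set I₁ := ∫ s in (0:ℝ)..t₀, Real.exp (V s) * w s with hI₁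
  set I₂ := ∫ s in (0:ℝ)..t₀, Real.exp (V s) * v s with hI₂
  set I₃ := ∫ s in (0:ℝ)..t₀, Real.exp (V s) with hI₃
  have hsplit : ∀ ε : ℝ, (∫ s in (0:ℝ)..t₀, Real.exp (V s) * (w s + v s * Real.sqrt ε + ε))
      = I₁ + Real.sqrt ε * I₂ + ε * I₃ := by
    intro ε
    have h1 : (∫ s in (0:ℝ)..t₀, Real.exp (V s) * (w s + v s * Real.sqrt ε + ε))
        = ∫ s in (0:ℝ)..t₀, (Real.exp (V s) * w s + Real.sqrt ε * (Real.exp (V s) * v s)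
            + ε * Real.exp (V s)) := intervalIntegral.integral_congr (fun s _ => by ring)
    rw [h1, intervalIntegral.integral_add (hEw.add (hEv.const_mul _)) (hE.const_mul _),
      intervalIntegral.integral_add hEw (hEv.const_mul _),
      intervalIntegral.integral_const_mul, intervalIntegral.integral_const_mul]
  have hcont0 : Continuous (fun ε : ℝ => Real.exp (-(V t₀)) *
      (Real.sqrt (u 0 + ε) + (I₁ + Real.sqrt ε * I₂ + ε * I₃))) := by fun_prop
  have hlim : Filter.Tendsto (fun ε : ℝ => Real.exp (-(V t₀)) *
      (Real.sqrt (u 0 + ε) + (I₁ + Real.sqrt ε * I₂ + ε * I₃))) (𝓝[>] (0:ℝ))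
      (𝓝 (Real.exp (-(V t₀)) * (Real.sqrt (u 0) + I₁))) := by
    have := (hcont0.tendsto 0).mono_left (nhdsWithin_le_nhds (s := Set.Ioi (0:ℝ)))
    simpa using this
  have hfinal : Real.sqrt (u t₀) ≤ Real.exp (-(V t₀)) * (Real.sqrt (u 0) + I₁) := by
    refine ge_of_tendsto hlim ?_
    filter_upwards [self_mem_nhdsWithin] with ε hε
    have h2 := key ε hε
    rwa [hsplit ε] at h2
  calc Real.sqrt (u t₀) ≤ Real.exp (-(V t₀)) * (Real.sqrt (u 0) + I₁) := hfinal
    _ = Real.exp (-(V t₀)) * Real.sqrt (u 0) + Real.exp (-(V t₀)) * I₁ := by ring
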